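/- Every finite simple graph G on n vertices admits a min-plus n-tropical dot product representation; in particular, the min-plus tropical dot product dimension ρ_T(G) is well defined and satisfies ρ_T(G) ≤ n. -/

import Mathlib

/-- A min-plus `k`-tropical dot product representation of `G` with threshold `t`:
distinct vertices `x, y` are adjacent iff `min_{1 ≤ i ≤ k} (f(x)_i + f(y)_i) ≥ t`
(equivalently, every coordinate sum is at least `t`). -/
def MinPlusRep {V : Type*} (G : SimpleGraph V) (k : ℕ) (f : V → Fin k → ℝ) (t : ℝ) : Prop :=
  0 < t ∧ ∀ x y : V, x ≠ y → (G.Adj x y ↔ ∀ i : Fin k, t ≤ f x i + f y i)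

/-- The min-plus tropical dot product dimension `ρ_T(G)`. -/
noncomputable def rhoT {V : Type*} (G : SimpleGraph V) : ℕ :=
  sInf {k : ℕ | 0 < k ∧ ∃ (f : V → Fin k → ℝ) (t : ℝ), MinPlusRep G k f t}

/-- Every finite simple graph on `n` vertices admits a min-plus `n`-tropical dot product
representation; in particular `ρ_T(G) ≤ n`. -/
theorem stmt_0 {V : Type*} [Fintype V] [Nonempty V] (G : SimpleGraph V) :
    (∃ (f : V → Fin (Fintype.card V) → ℝ) (t : ℝ), MinPlusRep G (Fintype.card V) f t) ∧
      rhoT G ≤ Fintype.card V := by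
  classical
  set e : Fin (Fintype.card V) ≃ V := (Fintype.equivFin V).symm with he
  set g : V → V → ℝ := fun v w => if v = w then -1 else if G.Adj v w then 2 else 1 with hg
  have hrep : MinPlusRep G (Fintype.card V) (fun v i => g v (e i)) 1 := by
    refine ⟨one_pos, fun x y hxy => ?_⟩
    constructor
    · intro hadj i
      set w := e i with hw
      by_cases hwx : x = w
      · have hyw : y ≠ w := fun h => hxy (hwx.trans h.symm)
        have hadj' : G.Adj y w := hwx ▸ hadj.symm
        simp only [hg, ← hw, if_pos hwx, if_neg hyw, if_pos hadj']
        norm_num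
      · by_cases hwy : y = w
        · have hadj' : G.Adj x w := hwy ▸ hadj
          simp only [hg, ← hw, if_neg hwx, if_pos hwy, if_pos hadj']
          norm_num
        · have h1 : (1:ℝ) ≤ g x w := by
            simp only [hg, if_neg hwx]; split <;> norm_num
          have h2 : (1:ℝ) ≤ g y w := by
            simp only [hg, if_neg hwy]; split <;> norm_num
          linarith
    · intro h
      by_contra hadj
      have := h (e.symm x)
      simp only [Equiv.apply_symm_apply] at this
      have hyx : ¬ G.Adj y x := fun h' => hadj h'.symm
      simp only [hg, if_pos rfl, if_neg hxy.symm, if_neg hyx] at this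
      linarith
  refine ⟨⟨_, 1, hrep⟩, ?_⟩
  apply Nat.sInf_le
  exact ⟨Fintype.card_pos, _, 1, hrep⟩
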